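/- arXiv:1506.01458 — 4 statements merged into one kernel-verified Lean document; each statement's English description precedes it below -/
import Mathlib

section
/- Let G be a finite group of characteristic p and P a p-subgroup of G. Then the normalizer N_G(P) is of characteristic p. -/
variable (p : ℕ) (G : Type*) [Group G]

/-- `O_p(G)`: the join of all normal `p`-subgroups of `G` (the largest normal `p`-subgroup
when `G` is finite). -/
def pCore : Subgroup G :=
  ⨆ H : {H : Subgroup G // H.Normal ∧ IsPGroup p H}, H.1

/-- `O_{p'}(G)`: the join of all normal subgroups of order coprime to `p` (the largest normal
`p'`-subgroup when `G` is finite). -/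
def pPrimeCore : Subgroup G :=
  ⨆ H : {H : Subgroup G // H.Normal ∧ Nat.Coprime (Nat.card H) p}, H.1

lemma iSup_normal {G : Type*} [Group G] {ι : Sort*} (H : ι → Subgroup G)
    (h : ∀ i, (H i).Normal) : (⨆ i, H i).Normal := by
  constructor
  intro n hn g
  refine Subgroup.iSup_induction (C := fun x => g * x * g⁻¹ ∈ ⨆ i, H i) H hn
    (fun i x hx => ?_) ?_ (fun x y hx hy => ?_)
  · exact Subgroup.mem_iSup_of_mem i ((h i).conj_mem x hx g)
  · simpa using Subgroup.one_mem (⨆ i, H i)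
  · have e : g * (x * y) * g⁻¹ = (g * x * g⁻¹) * (g * y * g⁻¹) := by group
    show g * (x * y) * g⁻¹ ∈ ⨆ i, H i
    rw [e]; exact mul_mem hx hy

instance pCore_normal : (pCore p G).Normal := iSup_normal _ (fun i => i.2.1)

instance pPrimeCore_normal : (pPrimeCore p G).Normal := iSup_normal _ (fun i => i.2.1)

/-- A group `G` is of characteristic `p` if `C_G(O_p(G)) ≤ O_p(G)`. -/
def IsCharP : Prop :=
  Subgroup.centralizer ((pCore p G : Subgroup G) : Set G) ≤ pCore p G

/-- A group `G` is almost of characteristic `p` if `G/O_{p'}(G)` is of characteristic `p`. -/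
def IsAlmostCharP : Prop := IsCharP p (G ⧸ pPrimeCore p G)


section Helpers

variable {G : Type*} [Group G]

lemma conj_pow'' (v x : G) (m : ℕ) : (v * x * v⁻¹) ^ m = v * x ^ m * v⁻¹ := by
  induction m with
  | zero => simp
  | succ k ihk => rw [pow_succ, pow_succ, ihk]; group

lemma conj_mem_normalizer {E : Subgroup G} {c g : G} (hc : c ∈ (Subgroup.normalizer E))
    (hg : g ∈ (Subgroup.normalizer E)) : c * g * c⁻¹ ∈ (Subgroup.normalizer E) := by
  rw [Subgroup.mem_normalizer_iff] at hg ⊢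
  intro y
  have h1 := Subgroup.mem_normalizer_iff''.mp hc y
  have h2 := hg (c⁻¹ * y * c)
  have h3 := Subgroup.mem_normalizer_iff.mp hc (g * (c⁻¹ * y * c) * g⁻¹)
  have key : c * (g * (c⁻¹ * y * c) * g⁻¹) * c⁻¹ = c * g * c⁻¹ * y * (c * g * c⁻¹)⁻¹ := by
    group
  rw [h1, h2, h3, key]

lemma conj_mem_normalizer_iff {E : Subgroup G} {c : G} (hc : c ∈ (Subgroup.normalizer E)) (g : G) :
    c * g * c⁻¹ ∈ (Subgroup.normalizer E) ↔ g ∈ (Subgroup.normalizer E) := by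
  constructor
  · intro h
    have h2 := conj_mem_normalizer (inv_mem hc) h
    have key : c⁻¹ * (c * g * c⁻¹) * c⁻¹⁻¹ = g := by group
    rwa [key] at h2
  · exact fun h => conj_mem_normalizer hc h

lemma card_lt_of_lt [Finite G] {H K : Subgroup G} (h : H < K) : Nat.card H < Nat.card K := by
  have h2 := Set.ncard_lt_ncard (SetLike.coe_ssubset_coe.mpr h) (Set.toFinite _)
  rw [← Nat.card_coe_set_eq, ← Nat.card_coe_set_eq] at h2; exact h2

/-- Conjugation by a normalizer element as a monoid hom on a subgroup. -/
def conjHom (Q : Subgroup G) (c : G) (hc : c ∈ (Subgroup.normalizer Q)) : ↥Q →* ↥Q where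
  toFun v := ⟨c * v * c⁻¹, (Subgroup.mem_normalizer_iff.mp hc v).mp v.2⟩
  map_one' := by ext; simp
  map_mul' v w := by ext; push_cast; group

@[simp] lemma conjHom_apply (Q : Subgroup G) (c : G) (hc : c ∈ (Subgroup.normalizer Q)) (v : ↥Q) :
    ((conjHom Q c hc v : ↥Q) : G) = c * v * c⁻¹ := rfl

/-- Conjugation descends to the quotient by an invariant subgroup. -/
def conjQuot (Q D : Subgroup G) [hn : (D.subgroupOf Q).Normal] (c : G)
    (hcQ : c ∈ (Subgroup.normalizer Q)) (hcD : c ∈ (Subgroup.normalizer D)) :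
    (↥Q ⧸ D.subgroupOf Q) →* (↥Q ⧸ D.subgroupOf Q) :=
  QuotientGroup.lift _ ((QuotientGroup.mk' _).comp (conjHom Q c hcQ)) (by
    intro v hv
    rw [MonoidHom.mem_ker, MonoidHom.comp_apply, QuotientGroup.mk'_apply,
      QuotientGroup.eq_one_iff, Subgroup.mem_subgroupOf]
    rw [Subgroup.mem_subgroupOf] at hv
    exact (Subgroup.mem_normalizer_iff.mp hcD _).mp hv)

@[simp] lemma conjQuot_mk (Q D : Subgroup G) [hn : (D.subgroupOf Q).Normal] (c : G)
    (hcQ : c ∈ (Subgroup.normalizer Q)) (hcD : c ∈ (Subgroup.normalizer D)) (v : ↥Q) :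
    conjQuot Q D c hcQ hcD (QuotientGroup.mk v) = QuotientGroup.mk (conjHom Q c hcQ v) := rfl

end Helpers

section PQ

variable {G : Type*} [Group G]

/-- Thompson's P×Q lemma (for a cyclic q-group generated by `x`). -/
lemma PQ_lemma [Finite G] {p q : ℕ} (hp : p.Prime) (hq : q.Prime) (hne : q ≠ p)
    (A : Subgroup G) (hAp : IsPGroup p A) (n : ℕ) :
    ∀ (Q : Subgroup G) (x : G), Nat.card Q ≤ n → IsPGroup p Q → x ^ q = 1 →
      x ∈ (Subgroup.normalizer Q) → A ≤ (Subgroup.normalizer Q) → (∀ a ∈ A, x * a = a * x) →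
      (∀ v ∈ Q, (∀ a ∈ A, v * a = a * v) → x * v = v * x) →
      ∀ v ∈ Q, x * v = v * x := by
  haveI : Fact p.Prime := ⟨hp⟩
  induction n using Nat.strong_induction_on with
  | _ n ih =>
  intro Q x hcard hQp hxq hxQ hAQ hxA hC
  by_contra hcon
  -- the collection of suitable x-centralized subgroups
  set S : Set (Subgroup G) :=
    {E | E ≤ Q ∧ x ∈ (Subgroup.normalizer E) ∧ A ≤ (Subgroup.normalizer E) ∧ ∀ d ∈ E, x * d = d * x} with hS
  have hbotS : (⊥ : Subgroup G) ∈ S := by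
    have hnorm : ∀ c : G, c ∈ (Subgroup.normalizer (⊥ : Subgroup G)) := by
      intro c
      rw [Subgroup.mem_normalizer_iff]
      intro y
      simp only [Subgroup.mem_bot]
      constructor
      · rintro rfl; group
      · intro hy
        have : c⁻¹ * (c * y * c⁻¹) * c = y := by group
        rw [← this, hy]; group
    exact ⟨bot_le, hnorm x, fun a _ => hnorm a, by simp⟩
  obtain ⟨D, hDS, hmax⟩ :=
    Set.Finite.exists_maximalFor id S (Set.toFinite S) ⟨⊥, hbotS⟩
  obtain ⟨hDQ, hxD, hAD, hxcD⟩ := hDS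
  -- D is proper in Q
  have hDne : D ≠ Q := by
    rintro rfl
    exact hcon hxcD
  have hDltQ : D < Q := lt_of_le_of_ne hDQ hDne
  -- normalizer of D grows inside Q
  haveI : Fact p.Prime := ⟨hp⟩
  have hnilp : Group.IsNilpotent ↥Q := hQp.isNilpotent
  have hnc : NormalizerCondition ↥Q := normalizerCondition_of_isNilpotent
  have hKlt : D.subgroupOf Q < (Subgroup.normalizer (D.subgroupOf Q)) := by
    apply hnc
    rw [lt_top_iff_ne_top]
    intro htop
    rw [Subgroup.subgroupOf_eq_top] at htop
    exact hDne (le_antisymm hDQ htop)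
  obtain ⟨g0, hg0N, hg0K⟩ := SetLike.exists_of_lt hKlt
  have hg0Q : (g0 : G) ∈ Q := g0.2
  have hg0D : (g0 : G) ∉ D := by
    intro h
    exact hg0K (Subgroup.mem_subgroupOf.mpr h)
  have hg0Dnorm : (g0 : G) ∈ (Subgroup.normalizer D) := by
    rw [Subgroup.mem_normalizer_iff]
    intro y
    constructor
    · intro hyD
      have hyQ : y ∈ Q := hDQ hyD
      have h6 := (Subgroup.mem_normalizer_iff.mp hg0N ⟨y, hyQ⟩).mp
        (Subgroup.mem_subgroupOf.mpr hyD)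
      rw [Subgroup.mem_subgroupOf] at h6
      simpa using h6
    · intro hyD'
      have hyQ : y ∈ Q := by
        have h7 : (g0 : G)⁻¹ * ((g0 : G) * y * (g0 : G)⁻¹) * (g0 : G) ∈ Q :=
          mul_mem (mul_mem (inv_mem g0.2) (hDQ hyD')) g0.2
        have key : (g0 : G)⁻¹ * ((g0 : G) * y * (g0 : G)⁻¹) * (g0 : G) = y := by group
        rwa [key] at h7
      have h8 := (Subgroup.mem_normalizer_iff.mp hg0N ⟨y, hyQ⟩).mpr
        (Subgroup.mem_subgroupOf.mpr (by simpa using hyD'))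
      rwa [Subgroup.mem_subgroupOf] at h8
  -- the normalizer subgroup N* = Q ⊓ N(D)
  set Nst : Subgroup G := Q ⊓ (Subgroup.normalizer D) with hNst
  have hDleN : D ≤ Nst := le_inf hDQ Subgroup.le_normalizer
  have hDltN : D < Nst :=
    lt_of_le_of_ne hDleN (fun h => hg0D (h ▸ (⟨hg0Q, hg0Dnorm⟩ : (g0:G) ∈ Nst)))
  have hxNst : x ∈ (Subgroup.normalizer Nst) := by
    rw [Subgroup.mem_normalizer_iff]
    intro y
    rw [Subgroup.mem_inf, Subgroup.mem_inf]
    exact and_congr (Subgroup.mem_normalizer_iff.mp hxQ y)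
      (conj_mem_normalizer_iff hxD y).symm
  have hANst : A ≤ (Subgroup.normalizer Nst) := by
    intro a ha
    rw [Subgroup.mem_normalizer_iff]
    intro y
    rw [Subgroup.mem_inf, Subgroup.mem_inf]
    exact and_congr (Subgroup.mem_normalizer_iff.mp (hAQ ha) y)
      (conj_mem_normalizer_iff (hAD ha) y).symm
  by_cases hNQ : Nst = Q
  · -- D is normal in Q; pass to the quotient
    have hQD : Q ≤ (Subgroup.normalizer D) := by rw [← hNQ]; exact inf_le_right
    haveI hKn : (D.subgroupOf Q).Normal := by
      constructor
      rintro ⟨d, hdQ⟩ hd ⟨g, hgQ⟩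
      rw [Subgroup.mem_subgroupOf] at hd ⊢
      exact (Subgroup.mem_normalizer_iff.mp (hQD hgQ) d).mp hd
    set W := (↥Q ⧸ D.subgroupOf Q) with hW
    -- action of A on W
    letI : SMul ↥A W := ⟨fun a w => conjQuot Q D a (hAQ a.2) (hAD a.2) w⟩
    have smul_def : ∀ (a : ↥A) (w : W), a • w = conjQuot Q D a (hAQ a.2) (hAD a.2) w :=
      fun _ _ => rfl
    letI : MulAction ↥A W :=
      { one_smul := by
          intro w
          induction w using QuotientGroup.induction_on with
          | H v =>
            rw [smul_def, conjQuot_mk]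
            congr 1
            ext
            simp
        mul_smul := by
          intro a b w
          induction w using QuotientGroup.induction_on with
          | H v =>
            rw [smul_def, smul_def, smul_def, conjQuot_mk, conjQuot_mk, conjQuot_mk]
            congr 1
            ext
            push_cast [conjHom_apply]
            group }
    -- fixed points form a subgroup
    have smul_mul : ∀ (a : ↥A) (w₁ w₂ : W), a • (w₁ * w₂) = (a • w₁) * (a • w₂) := by
      intro a w₁ w₂
      rw [smul_def, smul_def, smul_def, map_mul]
    set F : Subgroup W :=
      { carrier := MulAction.fixedPoints ↥A W
        one_mem' := by
          intro a
          rw [smul_def, map_one]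
        mul_mem' := by
          intro w₁ w₂ h1 h2 a
          rw [smul_mul, h1 a, h2 a]
        inv_mem' := by
          intro w h a
          rw [smul_def, map_inv]
          have h2 := h a
          rw [smul_def] at h2
          rw [h2] } with hF
    -- membership in the preimage subgroup
    set D₂ : Subgroup G := (F.comap (QuotientGroup.mk' (D.subgroupOf Q))).map Q.subtype
      with hD₂
    have hD₂mem : ∀ g : G, g ∈ D₂ ↔
        ∃ hg : g ∈ Q, ∀ a : ↥A, ((a : G) * g * (a : G)⁻¹)⁻¹ * g ∈ D := by
      intro g
      constructor
      · rintro ⟨⟨v, hvQ⟩, hvF, rfl⟩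
        refine ⟨hvQ, ?_⟩
        intro a
        have h9 : a • (QuotientGroup.mk (⟨v, hvQ⟩ : ↥Q) : W) = QuotientGroup.mk ⟨v, hvQ⟩ :=
          hvF a
        rw [smul_def, conjQuot_mk] at h9
        rw [QuotientGroup.eq] at h9
        rw [Subgroup.mem_subgroupOf] at h9
        simpa using h9
      · rintro ⟨hgQ, hfix⟩
        refine ⟨⟨g, hgQ⟩, ?_, rfl⟩
        show QuotientGroup.mk (⟨g, hgQ⟩ : ↥Q) ∈ F
        intro a
        rw [smul_def, conjQuot_mk, QuotientGroup.eq, Subgroup.mem_subgroupOf]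
        simpa using hfix a
    have hD₂Q : D₂ ≤ Q := by
      rintro g hg
      obtain ⟨hgQ, -⟩ := (hD₂mem g).mp hg
      exact hgQ
    have hDD₂ : D ≤ D₂ := by
      intro d hd
      rw [hD₂mem]
      refine ⟨hDQ hd, ?_⟩
      intro a
      have h10 : (a : G) * d * (a : G)⁻¹ ∈ D :=
        (Subgroup.mem_normalizer_iff.mp (hAD a.2) d).mp hd
      exact mul_mem (inv_mem h10) hd
    -- a fixed point outside D
    have hWp : IsPGroup p W := hQp.to_quotient (D.subgroupOf Q)
    have hWnt : Nontrivial W := by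
      obtain ⟨v, hvQ, hvD⟩ := SetLike.exists_of_lt hDltQ
      refine ⟨QuotientGroup.mk (⟨v, hvQ⟩ : ↥Q), 1, ?_⟩
      rw [ne_eq, QuotientGroup.eq_one_iff, Subgroup.mem_subgroupOf]
      exact hvD
    have hpW : p ∣ Nat.card W := by
      obtain ⟨k, hk0, hk⟩ := hWp.nontrivial_iff_card.mp hWnt
      exact hk ▸ dvd_pow_self p hk0.ne'
    have h1F : (1 : W) ∈ MulAction.fixedPoints ↥A W := by
      intro a
      rw [smul_def, map_one]
    obtain ⟨w, hwF, hwne⟩ :=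
      hAp.exists_fixed_point_of_prime_dvd_card_of_fixed_point W hpW h1F
    obtain ⟨v0, rfl⟩ := QuotientGroup.mk_surjective w
    have hv0D₂ : (v0 : G) ∈ D₂ := ⟨v0, hwF, rfl⟩
    have hv0D : (v0 : G) ∉ D := by
      intro h
      apply hwne
      rw [eq_comm, QuotientGroup.eq_one_iff, Subgroup.mem_subgroupOf]
      exact h
    -- invariance of D₂
    have hD₂conj : ∀ c : G, c ∈ (Subgroup.normalizer Q) → c ∈ (Subgroup.normalizer D) →
        (∀ a : ↥A, c⁻¹ * a * c ∈ A) → ∀ g ∈ D₂, c * g * c⁻¹ ∈ D₂ := by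
      intro c hcQ hcD hcA g hg
      rw [hD₂mem] at hg ⊢
      obtain ⟨hgQ, hgfix⟩ := hg
      refine ⟨(Subgroup.mem_normalizer_iff.mp hcQ g).mp hgQ, ?_⟩
      intro a
      have h1 := hgfix ⟨c⁻¹ * a * c, hcA a⟩
      simp only [Subgroup.coe_mk] at h1
      have key : ((a : G) * (c * g * c⁻¹) * (a : G)⁻¹)⁻¹ * (c * g * c⁻¹)
          = c * (((c⁻¹ * (a : G) * c) * g * (c⁻¹ * (a : G) * c)⁻¹)⁻¹ * g) * c⁻¹ := by
        group
      rw [key]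
      exact (Subgroup.mem_normalizer_iff.mp hcD _).mp h1
    have hxAconj : ∀ a : ↥A, x⁻¹ * a * x ∈ A := by
      intro a
      have h0 := hxA a a.2
      have h11 : x⁻¹ * (a : G) * x = a := by
        calc x⁻¹ * (a : G) * x = x⁻¹ * ((a : G) * x) := by group
          _ = x⁻¹ * (x * (a : G)) := by rw [h0]
          _ = a := by group
      rw [h11]; exact a.2
    have hxinvAconj : ∀ a : ↥A, x⁻¹⁻¹ * a * x⁻¹ ∈ A := by
      intro a
      have h11 : x⁻¹⁻¹ * (a : G) * x⁻¹ = a := by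
        calc x⁻¹⁻¹ * (a : G) * x⁻¹ = x * (a : G) * x⁻¹ := by group
          _ = (a : G) * x * x⁻¹ := by rw [hxA a a.2]
          _ = a := by group
      rw [h11]; exact a.2
    have hxD₂ : x ∈ (Subgroup.normalizer D₂) := by
      rw [Subgroup.mem_normalizer_iff]
      intro g
      constructor
      · exact fun h => hD₂conj x hxQ hxD hxAconj g h
      · intro h
        have h12 := hD₂conj x⁻¹ (inv_mem hxQ) (inv_mem hxD) hxinvAconj _ h
        have key : x⁻¹ * (x * g * x⁻¹) * x⁻¹⁻¹ = g := by group
        rwa [key] at h12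
    have hAD₂ : A ≤ (Subgroup.normalizer D₂) := by
      intro b hb
      rw [Subgroup.mem_normalizer_iff]
      intro g
      constructor
      · exact fun h => hD₂conj b (hAQ hb) (hAD hb)
          (fun a => mul_mem (mul_mem (inv_mem hb) a.2) hb) g h
      · intro h
        have h12 := hD₂conj b⁻¹ (inv_mem (hAQ hb)) (inv_mem (hAD hb))
          (fun a => by
            have : b⁻¹⁻¹ * (a : G) * b⁻¹ = b * a * b⁻¹ := by group
            rw [this]
            exact mul_mem (mul_mem hb a.2) (inv_mem hb)) _ h
        have key : b⁻¹ * (b * g * b⁻¹) * b⁻¹⁻¹ = g := by group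
        rwa [key] at h12
    by_cases hD₂eq : D₂ = Q
    · -- conclude: x centralizes Q
      apply hcon
      -- first: x commutes with all commutators [x,v]
      have hcomm : ∀ v ∈ Q, ∀ a : ↥A,
          (a : G) * (x * v * x⁻¹ * v⁻¹) = (x * v * x⁻¹ * v⁻¹) * a := by
        intro v hv a
        obtain ⟨-, hfix⟩ := (hD₂mem v).mp (hD₂eq.symm ▸ hv)
        have hdD : ((a : G) * v * (a : G)⁻¹)⁻¹ * v ∈ D := hfix a
        set d := ((a : G) * v * (a : G)⁻¹)⁻¹ * v with hd_def
        have hdx : x * d = d * x := hxcD d hdD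
        have hax : (a : G) * x = x * (a : G) := (hxA a a.2).symm
        have hax2 : (a : G) * x * (a : G)⁻¹ = x := by rw [hax]; group
        have hconj : (a : G) * v * (a : G)⁻¹ = v * d⁻¹ := by rw [hd_def]; group
        have key : (a : G) * (x * v * x⁻¹ * v⁻¹) * (a : G)⁻¹
            = ((a : G) * x * (a : G)⁻¹) * ((a : G) * v * (a : G)⁻¹) *
              ((a : G) * x * (a : G)⁻¹)⁻¹ * ((a : G) * v * (a : G)⁻¹)⁻¹ := by group
        rw [hax2, hconj] at key
        have cxd : Commute x d := hdx
        have c2 : Commute x⁻¹ d⁻¹ := (cxd.inv_left).inv_right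
        have hdx2 : d⁻¹ * x⁻¹ * d = x⁻¹ := by
          rw [← c2.eq]
          group
        have key2 : x * (v * d⁻¹) * x⁻¹ * (v * d⁻¹)⁻¹ = x * v * (d⁻¹ * x⁻¹ * d) * v⁻¹ := by
          group
        rw [hdx2] at key2
        have keq : (a : G) * (x * v * x⁻¹ * v⁻¹) * (a : G)⁻¹ = x * v * x⁻¹ * v⁻¹ :=
          key.trans key2
        calc (a : G) * (x * v * x⁻¹ * v⁻¹)
            = ((a : G) * (x * v * x⁻¹ * v⁻¹) * (a : G)⁻¹) * a := by group
          _ = (x * v * x⁻¹ * v⁻¹) * a := by rw [keq]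
      have hcQmem : ∀ v ∈ Q, x * v * x⁻¹ * v⁻¹ ∈ Q := by
        intro v hv
        exact mul_mem ((Subgroup.mem_normalizer_iff.mp hxQ v).mp hv) (inv_mem hv)
      have hxc2 : ∀ v ∈ Q, x * (x * v * x⁻¹ * v⁻¹) = (x * v * x⁻¹ * v⁻¹) * x := by
        intro v hv
        exact hC _ (hcQmem v hv) (fun a ha => (hcomm v hv ⟨a, ha⟩).symm)
      intro v hv
      have hcx : Commute x (x * v * x⁻¹ * v⁻¹) := hxc2 v hv
      have hn'Q : x⁻¹ * v * x * v⁻¹ ∈ Q := by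
        have h1 : x⁻¹ * v * x ∈ Q := (Subgroup.mem_normalizer_iff''.mp hxQ v).mp hv
        exact mul_mem h1 (inv_mem hv)
      have hxn : Commute x (x⁻¹ * v * x * v⁻¹) := by
        have h2 : x⁻¹ * v * x * v⁻¹ = x⁻¹ * (x * v * x⁻¹ * v⁻¹)⁻¹ * x := by group
        rw [h2]
        exact (((Commute.refl x).inv_right).mul_right hcx.inv_right).mul_right
          (Commute.refl x)
      have hn'q : (x⁻¹ * v * x * v⁻¹) ^ q = 1 := by
        have h3 : x * (x⁻¹ * v * x * v⁻¹) = v * x * v⁻¹ := by group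
        calc (x⁻¹ * v * x * v⁻¹) ^ q = x ^ q * (x⁻¹ * v * x * v⁻¹) ^ q := by
              rw [hxq, one_mul]
          _ = (x * (x⁻¹ * v * x * v⁻¹)) ^ q := (hxn.mul_pow q).symm
          _ = (v * x * v⁻¹) ^ q := by rw [h3]
          _ = v * x ^ q * v⁻¹ := conj_pow'' v x q
          _ = 1 := by rw [hxq]; group
      obtain ⟨k, hk⟩ := hQp ⟨_, hn'Q⟩
      have hkG : (x⁻¹ * v * x * v⁻¹) ^ p ^ k = 1 := by
        simpa [Subtype.ext_iff] using hk
      have hord1 : orderOf (x⁻¹ * v * x * v⁻¹) ∣ q := orderOf_dvd_of_pow_eq_one hn'q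
      have hord2 : orderOf (x⁻¹ * v * x * v⁻¹) ∣ p ^ k := orderOf_dvd_of_pow_eq_one hkG
      have hcop : Nat.Coprime q (p ^ k) :=
        Nat.Coprime.pow_right k ((Nat.coprime_primes hq hp).mpr hne)
      have hord3 := Nat.dvd_gcd hord1 hord2
      rw [Nat.Coprime] at hcop
      rw [hcop] at hord3
      have hn'1 : x⁻¹ * v * x * v⁻¹ = 1 := orderOf_eq_one_iff.mp (Nat.dvd_one.mp hord3)
      have hfin : x * (x⁻¹ * v * x * v⁻¹) * v = v * x := by group
      rw [hn'1] at hfin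
      rw [mul_one] at hfin
      rw [← hfin]
    · -- D₂ < Q, contradiction with maximality
      have hD₂lt : D₂ < Q := lt_of_le_of_ne hD₂Q hD₂eq
      have hcent := ih (Nat.card D₂) (lt_of_lt_of_le (card_lt_of_lt hD₂lt) hcard) D₂ x
        le_rfl (hQp.to_le hD₂Q) hxq hxD₂ hAD₂ hxA
        (fun v hv hva => hC v (hD₂Q hv) hva)
      have hD₂S : D₂ ∈ S := ⟨hD₂Q, hxD₂, hAD₂, hcent⟩
      have h13 : D = D₂ := le_antisymm hDD₂ (hmax hD₂S hDD₂)
      exact hv0D (by rw [h13]; exact hv0D₂)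
  · -- Nst < Q : contradiction with maximality
    have hNstQ : Nst ≤ Q := inf_le_left
    have hNlt : Nst < Q := lt_of_le_of_ne hNstQ hNQ
    have hcent := ih (Nat.card Nst) (lt_of_lt_of_le (card_lt_of_lt hNlt) hcard) Nst x
      le_rfl (hQp.to_le hNstQ) hxq hxNst hANst hxA
      (fun v hv hva => hC v (hNstQ hv) hva)
    have hNS : Nst ∈ S := ⟨hNstQ, hxNst, hANst, hcent⟩
    have h14 : D = Nst := le_antisymm hDleN (hmax hNS hDleN)
    exact hDltN.ne h14

end PQ


section PCoreFacts

lemma le_pCore' {p : ℕ} {K : Type*} [Group K] (N : Subgroup K) (h1 : N.Normal)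
    (h2 : IsPGroup p N) : N ≤ pCore p K :=
  le_iSup (fun (H : {H : Subgroup K // H.Normal ∧ IsPGroup p H}) => (H : Subgroup K)) ⟨N, h1, h2⟩

lemma pCore_isPGroup' (p : ℕ) (K : Type*) [Group K] [Finite K] :
    IsPGroup p ↥(pCore p K) := by
  classical
  haveI : Finite (Subgroup K) :=
    Finite.of_injective (fun H => (H : Set K)) SetLike.coe_injective
  haveI : Fintype {H : Subgroup K // H.Normal ∧ IsPGroup p H} := Fintype.ofFinite _
  set f := fun (H : {H : Subgroup K // H.Normal ∧ IsPGroup p H}) => (H : Subgroup K) with hf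
  have heq : pCore p K = Finset.univ.sup f := by
    apply le_antisymm
    · exact iSup_le fun i => Finset.le_sup (Finset.mem_univ i)
    · exact Finset.sup_le fun i _ => le_iSup _ i
  have hind : (Finset.univ.sup f).Normal ∧ IsPGroup p ↥(Finset.univ.sup f) := by
    refine Finset.sup_induction (p := fun E : Subgroup K => E.Normal ∧ IsPGroup p ↥E)
      ⟨inferInstance, IsPGroup.of_bot⟩ ?_ ?_
    · rintro E₁ ⟨h1n, h1p⟩ E₂ ⟨h2n, h2p⟩
      constructor
      · have hb := iSup_normal (fun b : Bool => cond b E₁ E₂)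
          (by rintro (_|_) <;> assumption)
        rwa [iSup_bool_eq] at hb
      · haveI := h2n
        exact h1p.to_sup_of_normal_right h2p
    · exact fun H _ => H.2
  rw [heq]
  exact hind.2

lemma centralizer_le_normalizer' {G : Type*} [Group G] (P : Subgroup G) :
    Subgroup.centralizer (P : Set G) ≤ (Subgroup.normalizer (P : Set G)) := by
  intro g hg
  rw [Subgroup.mem_centralizer_iff] at hg
  rw [Subgroup.mem_normalizer_iff]
  intro y
  constructor
  · intro hy
    have h1 : g * y * g⁻¹ = y := by rw [← hg y hy]; group
    rwa [h1]
  · intro hy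
    have h2 := hg _ hy
    have h3 : g * y = g * (g * y * g⁻¹) := by
      calc g * y = g * y * g⁻¹ * g := by group
        _ = g * (g * y * g⁻¹) := h2
    have h4 : y = g * y * g⁻¹ := mul_left_cancel h3
    rw [h4]; exact hy

lemma centralizer_normal' {G : Type*} [Group G] (N : Subgroup G) (hN : N.Normal) :
    (Subgroup.centralizer (N : Set G)).Normal := by
  constructor
  intro z hz g
  rw [Subgroup.mem_centralizer_iff] at hz ⊢
  intro h hh
  have hh' : g⁻¹ * h * g ∈ N := by
    have := hN.conj_mem h hh g⁻¹
    rwa [inv_inv] at this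
  have h5 := hz _ hh'
  have key : h * (g * z * g⁻¹) = g * (g⁻¹ * h * g * z) * g⁻¹ := by group
  rw [key, h5]
  group

end PCoreFacts

/-- If `G` is a finite group of characteristic `p` and `P` is a `p`-subgroup of `G`, then
`N_G(P)` is of characteristic `p`. -/
theorem isCharP_normalizer (p : ℕ) [Fact p.Prime] (G : Type*) [Group G] [Finite G]
    (hG : IsCharP p G) (P : Subgroup G) (hP : IsPGroup p P) :
    IsCharP p (Subgroup.normalizer (P : Set G)) := by
  classical
  have hp : p.Prime := Fact.out
  have hG' : Subgroup.centralizer ((pCore p G : Subgroup G) : Set G) ≤ pCore p G := hG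
  show Subgroup.centralizer ((pCore p ↥(Subgroup.normalizer (P : Set G)) : Subgroup ↥(Subgroup.normalizer (P : Set G))) : Set ↥(Subgroup.normalizer (P : Set G)))
    ≤ pCore p ↥(Subgroup.normalizer (P : Set G))
  set C : Subgroup ↥(Subgroup.normalizer (P : Set G)) :=
    Subgroup.centralizer ((pCore p ↥(Subgroup.normalizer (P : Set G)) : Subgroup ↥(Subgroup.normalizer (P : Set G))) : Set ↥(Subgroup.normalizer (P : Set G)))
    with hCdef
  have hCnormal : C.Normal := centralizer_normal' _ (pCore_normal p ↥(Subgroup.normalizer (P : Set G)))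
  have hQpG : IsPGroup p ↥(pCore p G) := pCore_isPGroup' p G
  have hPH : P ≤ (Subgroup.normalizer (P : Set G)) := Subgroup.le_normalizer
  -- x commutes with everything whose class lies in the p-core of the normalizer
  have hcent_c : ∀ c : ↥C, ∀ y : ↥(Subgroup.normalizer (P : Set G)), y ∈ pCore p ↥(Subgroup.normalizer (P : Set G)) →
      (y : G) * ((c : ↥(Subgroup.normalizer (P : Set G))) : G) = ((c : ↥(Subgroup.normalizer (P : Set G))) : G) * (y : G) := by
    intro c y hy
    have h1 := Subgroup.mem_centralizer_iff.mp c.2 y (by exact hy)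
    have h2 := congrArg (fun z : ↥(Subgroup.normalizer (P : Set G)) => (z : G)) h1
    push_cast at h2
    exact h2
  have hPcore : P.subgroupOf (Subgroup.normalizer (P : Set G)) ≤ pCore p ↥(Subgroup.normalizer (P : Set G)) :=
    le_pCore' _ Subgroup.normal_in_normalizer
      (hP.comap_of_injective (Subgroup.normalizer (P : Set G)).subtype (Subgroup.normalizer (P : Set G)).subtype_injective)
  -- every prime dividing |C| equals p
  have hcpow : ∀ r : ℕ, r.Prime → r ∣ Nat.card ↥C → r = p := by
    intro r hr hrdvd
    by_contra hrp
    haveI : Fact r.Prime := ⟨hr⟩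
    obtain ⟨c, hc_ord⟩ := exists_prime_orderOf_dvd_card' (G := ↥C) r hrdvd
    set x : G := ((c : ↥(Subgroup.normalizer (P : Set G))) : G) with hx
    have hxord : orderOf x = r := by
      rw [← hc_ord]
      have e1 : orderOf x = orderOf (c : ↥(Subgroup.normalizer (P : Set G))) :=
        orderOf_injective (Subgroup.normalizer (P : Set G)).subtype (Subgroup.normalizer (P : Set G)).subtype_injective _
      have e2 : orderOf (c : ↥(Subgroup.normalizer (P : Set G))) = orderOf c :=
        orderOf_injective C.subtype C.subtype_injective c
      rw [e1, e2]
    have hxA : ∀ a ∈ P, x * a = a * x := by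
      intro a ha
      have haH : a ∈ (Subgroup.normalizer (P : Set G)) := hPH ha
      have h3 : (⟨a, haH⟩ : ↥(Subgroup.normalizer (P : Set G))) ∈ pCore p ↥(Subgroup.normalizer (P : Set G)) :=
        hPcore (Subgroup.mem_subgroupOf.mpr ha)
      exact (hcent_c c ⟨a, haH⟩ h3).symm
    have hC' : ∀ v ∈ pCore p G, (∀ a ∈ P, v * a = a * v) → x * v = v * x := by
      intro v hv hva
      have hvcent : v ∈ Subgroup.centralizer (P : Set G) := by
        rw [Subgroup.mem_centralizer_iff]
        intro g hg
        exact (hva g hg).symm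
      have hvH : v ∈ (Subgroup.normalizer (P : Set G)) := centralizer_le_normalizer' P hvcent
      have hK0n : ((pCore p G ⊓ Subgroup.centralizer (P : Set G)).subgroupOf
          (Subgroup.normalizer (P : Set G))).Normal := by
        constructor
        rintro ⟨k, hkH⟩ hk ⟨h, hhH⟩
        rw [Subgroup.mem_subgroupOf] at hk ⊢
        rw [Subgroup.mem_inf] at hk
        have goal1 : h * k * h⁻¹ ∈ pCore p G ⊓ Subgroup.centralizer (P : Set G) := by
          rw [Subgroup.mem_inf]
          constructor
          · exact (pCore_normal p G).conj_mem k hk.1 h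
          · rw [Subgroup.mem_centralizer_iff]
            intro y hyP
            have hy' : h⁻¹ * y * h ∈ P := (Subgroup.mem_normalizer_iff''.mp hhH y).mp hyP
            have h5 := Subgroup.mem_centralizer_iff.mp hk.2 _ hy'
            have key : y * (h * k * h⁻¹) = h * (h⁻¹ * y * h * k) * h⁻¹ := by group
            rw [key, h5]
            group
        exact goal1
      have hK0p : IsPGroup p
          ↥((pCore p G ⊓ Subgroup.centralizer (P : Set G)).subgroupOf (Subgroup.normalizer (P : Set G))) :=
        (hQpG.to_inf_left).comap_of_injective (Subgroup.normalizer (P : Set G)).subtype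
          (Subgroup.normalizer (P : Set G)).subtype_injective
      have h6 : (⟨v, hvH⟩ : ↥(Subgroup.normalizer (P : Set G))) ∈ pCore p ↥(Subgroup.normalizer (P : Set G)) :=
        le_pCore' _ hK0n hK0p
          (Subgroup.mem_subgroupOf.mpr (Subgroup.mem_inf.mpr ⟨hv, hvcent⟩))
      exact (hcent_c c ⟨v, hvH⟩ h6).symm
    have hxq : x ^ r = 1 := by rw [← hxord]; exact pow_orderOf_eq_one x
    have hnorm_top : (Subgroup.normalizer (pCore p G : Set G)) = ⊤ :=
      Subgroup.normalizer_eq_top_iff.mpr (pCore_normal p G)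
    have hcentQ := PQ_lemma hp hr hrp P hP (Nat.card ↥(pCore p G)) (pCore p G) x le_rfl
      hQpG hxq (by rw [hnorm_top]; exact Subgroup.mem_top x)
      (by rw [hnorm_top]; exact le_top) hxA hC'
    have hxQmem : x ∈ pCore p G := hG' (by
      rw [Subgroup.mem_centralizer_iff]
      intro h hh
      exact (hcentQ h hh).symm)
    obtain ⟨k, hk⟩ := hQpG ⟨x, hxQmem⟩
    have hkG : x ^ p ^ k = 1 := by simpa [Subtype.ext_iff] using hk
    have hdvd : r ∣ p ^ k := hxord ▸ orderOf_dvd_of_pow_eq_one hkG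
    have h7 : r ∣ p := hr.dvd_of_dvd_pow hdvd
    exact hrp ((Nat.prime_dvd_prime_iff_eq hr hp).mp h7)
  have hcard0 : Nat.card ↥C ≠ 0 := Nat.card_pos.ne'
  have hCp : IsPGroup p ↥C :=
    IsPGroup.of_card (Nat.eq_prime_pow_of_unique_prime_dvd hcard0
      (fun {d} hd hdvd => hcpow d hd hdvd))
  exact le_pCore' C hCnormal hCp
end

section
/- Let G be a finite group with a normal p-subgroup P such that the centralizer C_G(P) is a p-group. Then G is of characteristic p. -/
variable (p : ℕ) (G : Type*) [Group G]

/-- If a finite group `G` has a normal `p`-subgroup `P` with `C_G(P)` a `p`-group, then `G` is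
of characteristic `p`. -/
theorem isCharP_of_centralizer_pGroup (p : ℕ) [Fact p.Prime] (G : Type*) [Group G] [Finite G]
    (P : Subgroup G) [P.Normal] (hP : IsPGroup p P)
    (hC : IsPGroup p (Subgroup.centralizer (P : Set G))) :
    IsCharP p G := by
  set C := Subgroup.centralizer ((pCore p G : Subgroup G) : Set G) with hCdef
  have hPle : P ≤ pCore p G :=
    le_iSup (fun H : {H : Subgroup G // H.Normal ∧ IsPGroup p H} => H.1)
      ⟨P, ‹P.Normal›, hP⟩
  have hCp : IsPGroup p C :=
    hC.to_le (Subgroup.centralizer_le hPle)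
  have hCnormal : C.Normal := by
    constructor
    intro n hn g
    intro x hx
    have hx' : g⁻¹ * x * g ∈ pCore p G := by
      have := (pCore_normal p G).conj_mem x hx g⁻¹
      simpa using this
    have := hn _ hx'
    simp only [hCdef, Subgroup.mem_centralizer_iff] at *
    have h1 : g⁻¹ * x * g * n = n * (g⁻¹ * x * g) := this
    have key : x * (g * n * g⁻¹) = (g * n * g⁻¹) * x := by
      have h2 := congrArg (fun y => g * y * g⁻¹) h1
      group at h2 ⊢
      exact h2
    exact key
  exact le_iSup (fun H : {H : Subgroup G // H.Normal ∧ IsPGroup p H} => H.1)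
    ⟨C, hCnormal, hCp⟩
end

section
/- Let G be a finite group with O_{p'}(G) = Θ, let P be a p-subgroup of G, and write ḡ for the image of g in G/Θ. Then the normalizer of the image of P in G/Θ equals the image of N_G(P), i.e. N_{G/Θ}(P̄) = (N_G(P))¯. -/
variable (p : ℕ) (G : Type*) [Group G]

open Pointwise

lemma card_sup_dvd_aux {G : Type*} [Group G] [Finite G] (H K : Subgroup G) [K.Normal] :
    Nat.card ↥(H ⊔ K) ∣ Nat.card H * Nat.card K := by
  have hKL : K ≤ H ⊔ K := le_sup_right
  have h1 : Nat.card ↥K * (K.subgroupOf (H ⊔ K)).index = Nat.card ↥(H ⊔ K) := by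
    have := Subgroup.card_mul_index (K.subgroupOf (H ⊔ K))
    rwa [Nat.card_congr (Subgroup.subgroupOfEquivOfLe hKL).toEquiv] at this
  have h2 : (K.subgroupOf (H ⊔ K)).index = K.relIndex H := Subgroup.relIndex_sup_right H K
  have h3 : K.relIndex H ∣ Nat.card H := Subgroup.index_dvd_card (K.subgroupOf H)
  rw [← h1, h2, mul_comm (Nat.card ↥H)]
  exact mul_dvd_mul_left _ h3

lemma pPrimeCore_coprime (p : ℕ) (G : Type*) [Group G] [Finite G] :
    Nat.Coprime (Nat.card (pPrimeCore p G)) p := by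
  classical
  set S : Set (Subgroup G) := {H | H.Normal ∧ Nat.Coprime (Nat.card H) p} with hS
  have hne : S.Nonempty := ⟨⊥, inferInstance, by simp [Subgroup.card_bot]⟩
  obtain ⟨M, hM, hmax0⟩ := (Set.toFinite S).exists_maximal hne
  have hmax : ∀ a' ∈ S, id M ≤ id a' → id M = id a' := fun a' ha' h => le_antisymm h (hmax0 ha' h)
  have hle : ∀ H ∈ S, H ≤ M := by
    intro H hH
    haveI := hH.1
    haveI := hM.1
    have hsup : H ⊔ M ∈ S :=
      ⟨inferInstance, Nat.Coprime.coprime_dvd_left (card_sup_dvd_aux H M) (hH.2.mul hM.2)⟩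
    have := hmax _ hsup le_sup_right
    simp only [id] at this
    rw [this]
    exact le_sup_left
  have heq : pPrimeCore p G = M := by
    apply le_antisymm
    · exact iSup_le fun H => hle H.1 H.2
    · exact le_iSup (fun H : {H : Subgroup G // H.Normal ∧ Nat.Coprime (Nat.card H) p} => H.1)
        ⟨M, hM.1, hM.2⟩
  rw [heq]
  exact hM.2


/-- Let `G` be a finite group, `Θ = O_{p'}(G)` and `P` a `p`-subgroup of `G`. Then
`N_{G/Θ}(P̄) = (N_G(P))¯`. -/
theorem normalizer_map_quotient (p : ℕ) [Fact p.Prime] (G : Type*) [Group G] [Finite G]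
    (P : Subgroup G) (hP : IsPGroup p P) :
    Subgroup.normalizer ((Subgroup.map (QuotientGroup.mk' (pPrimeCore p G)) P : Subgroup _) : Set _) =
      Subgroup.map (QuotientGroup.mk' (pPrimeCore p G)) (Subgroup.normalizer (P : Set G)) := by
  classical
  set Θ := pPrimeCore p G with hΘ
  set f := QuotientGroup.mk' Θ with hf
  have hker : f.ker = Θ := QuotientGroup.ker_mk' Θ
  refine le_antisymm ?_ (Subgroup.le_normalizer_map f)
  intro x hx
  obtain ⟨g, rfl⟩ := QuotientGroup.mk'_surjective Θ x
  set K : Subgroup G := P ⊔ Θ with hK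
  have hPK : P ≤ K := le_sup_left
  have hcomap : Subgroup.comap f (Subgroup.map f P) = K := by
    rw [Subgroup.comap_map_eq, hker]
  have hgK : g ∈ Subgroup.normalizer (K : Set G) := by
    have hcn := Subgroup.comap_normalizer_eq_of_surjective (Subgroup.map f P)
      (QuotientGroup.mk'_surjective Θ)
    rw [hcomap] at hcn
    rw [← hcn]
    exact hx
  have hcop : Nat.Coprime (Nat.card Θ) p := pPrimeCore_coprime p G
  -- key index fact
  have key : ∀ Q : Subgroup G, Q ≤ K → Nat.card Q = Nat.card P → ¬ p ∣ (Q.subgroupOf K).index := by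
    intro Q hQK hcard hdvd
    have h1 : Nat.card Q * (Q.subgroupOf K).index = Nat.card ↥K := by
      have := Subgroup.card_mul_index (Q.subgroupOf K)
      rwa [Nat.card_congr (Subgroup.subgroupOfEquivOfLe hQK).toEquiv] at this
    have h2 : Nat.card ↥K ∣ Nat.card P * Nat.card Θ := card_sup_dvd_aux P Θ
    rw [hcard] at h1
    rw [← h1] at h2
    have h4 : (Q.subgroupOf K).index ∣ Nat.card Θ :=
      (Nat.mul_dvd_mul_iff_left (Nat.card_pos (α := ↥P))).mp h2
    exact ((Nat.Prime.coprime_iff_not_dvd Fact.out).mp hcop.symm) (hdvd.trans h4)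
  have hP' : IsPGroup p (P.subgroupOf K) := hP.of_equiv (Subgroup.subgroupOfEquivOfLe hPK).symm
  set Q : Subgroup G := P.map (MulAut.conj g).toMonoidHom with hQdef
  have hQK : Q ≤ K := by
    rintro x ⟨y, hy, rfl⟩
    exact (Subgroup.mem_normalizer_iff.mp hgK y).mp (hPK hy)
  have hQcard : Nat.card Q = Nat.card P :=
    (Nat.card_congr (Subgroup.equivMapOfInjective P _ (MulAut.conj g).injective).toEquiv).symm
  have hQ' : IsPGroup p (Q.subgroupOf K) :=
    (hP.map _).of_equiv (Subgroup.subgroupOfEquivOfLe hQK).symm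
  let S₁ : Sylow p K := hP'.toSylow (key P hPK rfl)
  let S₂ : Sylow p K := hQ'.toSylow (key Q hQK hQcard)
  obtain ⟨k, hk⟩ := MulAction.exists_smul_eq (↥K) S₂ S₁
  have hk' : Subgroup.map (MulAut.conj k).toMonoidHom (Q.subgroupOf K) = P.subgroupOf K := by
    have := congrArg Sylow.toSubgroup hk
    exact this
  have hcomm : K.subtype.comp (MulAut.conj k).toMonoidHom =
      (MulAut.conj (↑k : G)).toMonoidHom.comp K.subtype := by
    ext b; simp [MulAut.conj_apply]
  have hmapped : Subgroup.map (MulAut.conj (↑k : G)).toMonoidHom Q = P := by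
    calc Subgroup.map (MulAut.conj (↑k : G)).toMonoidHom Q
        = Subgroup.map (MulAut.conj (↑k : G)).toMonoidHom
            (Subgroup.map K.subtype (Q.subgroupOf K)) := by
          rw [Subgroup.subgroupOf_map_subtype, inf_of_le_left hQK]
      _ = Subgroup.map K.subtype
            (Subgroup.map (MulAut.conj k).toMonoidHom (Q.subgroupOf K)) := by
          rw [Subgroup.map_map, Subgroup.map_map, hcomm]
      _ = Subgroup.map K.subtype (P.subgroupOf K) := by rw [hk']
      _ = P := by rw [Subgroup.subgroupOf_map_subtype, inf_of_le_left hPK]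
  have hfinal : Subgroup.map (MulAut.conj ((↑k : G) * g)).toMonoidHom P = P := by
    have hsplit : Subgroup.map (MulAut.conj ((↑k : G) * g)).toMonoidHom P =
        Subgroup.map (MulAut.conj (↑k : G)).toMonoidHom
          (Subgroup.map (MulAut.conj g).toMonoidHom P) := by
      rw [Subgroup.map_map]
      congr 1
      ext b
      simp only [MonoidHom.comp_apply, MulEquiv.coe_toMonoidHom, MulAut.conj_apply]
      group
    rw [hsplit, ← hQdef, hmapped]
  have hnorm : (↑k : G) * g ∈ Subgroup.normalizer (P : Set G) := by
    rw [Subgroup.mem_normalizer_iff]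
    intro h
    have hiff := Subgroup.mem_map_iff_mem (f := (MulAut.conj ((↑k : G) * g)).toMonoidHom)
      (MulAut.conj ((↑k : G) * g)).injective (K := P) (x := h)
    rw [hfinal] at hiff
    have e : ((↑k : G) * g) * h * ((↑k : G) * g)⁻¹ = ↑k * (g * h * g⁻¹) * (↑k : G)⁻¹ := by
      group
    rw [e]
    simpa [MulAut.conj_apply] using hiff.symm
  -- f ↑k ∈ map f P
  have hmapK : Subgroup.map f K = Subgroup.map f P := by
    have hbot : Subgroup.map f Θ = ⊥ := by
      rw [eq_bot_iff]
      rintro y ⟨z, hz, rfl⟩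
      simp only [Subgroup.mem_bot]
      rw [← hker] at hz
      exact hz
    rw [hK, Subgroup.map_sup, hbot, sup_bot_eq]
  have hfk : f (↑k : G) ∈ Subgroup.map f P := by
    rw [← hmapK]
    exact ⟨↑k, k.2, rfl⟩
  have h1 : f ((↑k : G) * g) ∈ Subgroup.map f (Subgroup.normalizer (P : Set G)) := ⟨_, hnorm, rfl⟩
  have h2 : f (↑k : G) ∈ Subgroup.map f (Subgroup.normalizer (P : Set G)) :=
    Subgroup.map_mono Subgroup.le_normalizer hfk
  have : f g = (f (↑k : G))⁻¹ * f ((↑k : G) * g) := by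
    rw [map_mul]; group
  rw [this]
  exact mul_mem (inv_mem h2) h1
end

section
/- Let G be a finite group and P a p-subgroup of G. Then N_G(P) is of characteristic p if and only if C_G(P) is of characteristic p. -/
variable (p : ℕ) (G : Type*) [Group G]

section Aux

variable {p : ℕ} {G : Type*} [Group G]

lemma le_pCore'_s14 (H : Subgroup G) (hN : H.Normal) (hp : IsPGroup p H) : H ≤ pCore p G :=
  le_iSup (fun K : {H : Subgroup G // H.Normal ∧ IsPGroup p H} => K.1) ⟨H, hN, hp⟩

lemma pCore_isPGroup [Fact p.Prime] [Finite G] : IsPGroup p (pCore p G) := by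
  obtain ⟨S⟩ : Nonempty (Sylow p G) := inferInstance
  refine IsPGroup.to_le S.isPGroup' ?_
  refine iSup_le fun K => ?_
  obtain ⟨T, hT⟩ := K.2.2.exists_le_sylow
  obtain ⟨g, hg⟩ := MulAction.exists_smul_eq G T S
  intro x hx
  have hx' : g⁻¹ * x * g ∈ K.1 := by
    have := K.2.1.conj_mem x hx g⁻¹
    simpa using this
  have : g⁻¹ * x * g ∈ (T : Subgroup G) := hT hx'
  have hmem : x ∈ ((g • T : Sylow p G) : Subgroup G) := by
    rw [Sylow.coe_subgroup_smul, Subgroup.mem_pointwise_smul_iff_inv_smul_mem]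
    simpa [MulAut.smul_def, mul_assoc] using this
  rwa [hg] at hmem

/-- The image in `G` of `O_p(H)` for a subgroup `H ≤ G`. -/
def auxOp (p : ℕ) {G : Type*} [Group G] (H : Subgroup G) : Subgroup G :=
  (pCore p H).map H.subtype

lemma auxOp_le (H : Subgroup G) : auxOp p H ≤ H := by
  rintro x ⟨y, _, rfl⟩; exact y.2

lemma mem_auxOp {H : Subgroup G} {x : G} :
    x ∈ auxOp p H ↔ ∃ hx : x ∈ H, (⟨x, hx⟩ : H) ∈ pCore p ↥H := by
  constructor
  · rintro ⟨y, hy, rfl⟩; exact ⟨y.2, hy⟩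
  · rintro ⟨hx, h⟩; exact ⟨⟨x, hx⟩, h, rfl⟩

lemma isPGroup_auxOp [Fact p.Prime] [Finite G] (H : Subgroup G) : IsPGroup p (auxOp p H) :=
  IsPGroup.map pCore_isPGroup H.subtype

lemma conj_mem_auxOp {H : Subgroup G} {g x : G} (hg : g ∈ H) (hx : x ∈ auxOp p H) :
    g * x * g⁻¹ ∈ auxOp p H := by
  rw [mem_auxOp] at hx ⊢
  obtain ⟨hxH, hx⟩ := hx
  have h := (pCore_normal p ↥H).conj_mem ⟨x, hxH⟩ hx ⟨g, hg⟩
  exact ⟨mul_mem (mul_mem hg hxH) (inv_mem hg), h⟩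

lemma le_auxOp {H K : Subgroup G} (hKH : K ≤ H) (hK : IsPGroup p K)
    (hconj : ∀ g ∈ H, ∀ x ∈ K, g * x * g⁻¹ ∈ K) : K ≤ auxOp p H := by
  have hnormal : (K.subgroupOf H).Normal := by
    constructor
    intro n hn g
    rw [Subgroup.mem_subgroupOf] at hn ⊢
    exact hconj g g.2 n hn
  have hpg : IsPGroup p (K.subgroupOf H) := by
    intro y
    obtain ⟨k, hk⟩ := hK ⟨(y : H), y.2⟩
    refine ⟨k, ?_⟩
    have : (((y : H) : G)) ^ p ^ k = 1 := congrArg Subtype.val hk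
    ext
    simpa using this
  have hle := le_pCore'_s14 (K.subgroupOf H) hnormal hpg
  intro x hx
  rw [mem_auxOp]
  refine ⟨hKH hx, hle ?_⟩
  rwa [Subgroup.mem_subgroupOf]

lemma isCharP_iff {H : Subgroup G} :
    IsCharP p ↥H ↔ ∀ g ∈ H, (∀ x ∈ auxOp p H, x * g = g * x) → g ∈ auxOp p H := by
  constructor
  · intro h g hg hcomm
    rw [mem_auxOp]
    refine ⟨hg, h ?_⟩
    rw [Subgroup.mem_centralizer_iff]
    intro y hy
    ext
    exact hcomm y (mem_auxOp.mpr ⟨y.2, hy⟩)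
  · intro h g hg
    rw [Subgroup.mem_centralizer_iff] at hg
    have := h g g.2 ?_
    · rw [mem_auxOp] at this
      obtain ⟨_, h2⟩ := this
      exact h2
    · intro x hx
      rw [mem_auxOp] at hx
      obtain ⟨hxH, hx⟩ := hx
      have := hg ⟨x, hxH⟩ hx
      exact congrArg Subtype.val this

end Aux

/-- Let `G` be a finite group and `P` a `p`-subgroup of `G`. Then `N_G(P)` is of characteristic
`p` if and only if `C_G(P)` is of characteristic `p`. -/
theorem isCharP_normalizer_iff_centralizer (p : ℕ) [Fact p.Prime]
    (G : Type*) [Group G] [Finite G] (P : Subgroup G) (hP : IsPGroup p P) :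
    IsCharP p (Subgroup.normalizer (P : Set G)) ↔ IsCharP p (Subgroup.centralizer (P : Set G)) := by
  set N := Subgroup.normalizer (P : Set G) with hNdef
  set C := Subgroup.centralizer (P : Set G) with hCdef
  -- C ≤ N
  have hCN : C ≤ N := by
    intro c hc
    rw [Subgroup.mem_normalizer_iff]
    intro x
    constructor
    · intro hx
      have := hc x hx
      rw [show c * x * c⁻¹ = x * c * c⁻¹ by rw [this], mul_inv_cancel_right]
      exact hx
    · intro hx
      have hy := hc _ hx
      have hx2 : x = c * x * c⁻¹ := by
        calc x = c⁻¹ * ((c * x * c⁻¹) * c) := by group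
        _ = c⁻¹ * (c * (c * x * c⁻¹)) := by rw [hy]
        _ = c * x * c⁻¹ := by group
      rw [hx2]; exact hx
  -- C is stable under conjugation by N
  have hCstab : ∀ g ∈ N, ∀ c ∈ C, g * c * g⁻¹ ∈ C := by
    intro g hg c hc
    rw [Subgroup.mem_centralizer_iff]
    intro x hx
    have hx' : g⁻¹ * x * g ∈ P := by
      rw [Subgroup.mem_normalizer_iff] at hg
      rw [hg]
      simpa [mul_assoc] using hx
    have := hc _ hx'
    have h2 := congrArg (fun t => g * t * g⁻¹) this
    simpa [mul_assoc] using h2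
  -- P ≤ O_p(N)
  have hPle : P ≤ auxOp p N := by
    refine le_auxOp Subgroup.le_normalizer hP ?_
    intro g hg x hx
    rw [Subgroup.mem_normalizer_iff] at hg
    exact (hg x).mp hx
  -- O_p(C) is stable under conjugation by N
  have hQCstab : ∀ g ∈ N, ∀ x ∈ auxOp p C, g * x * g⁻¹ ∈ auxOp p C := by
    intro g hg x hx
    have hKle : (auxOp p C).map (MulAut.conj g).toMonoidHom ≤ auxOp p C := by
      refine le_auxOp ?_ ?_ ?_
      · rintro y ⟨w, hw, rfl⟩
        exact hCstab g hg w (auxOp_le C hw)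
      · exact IsPGroup.map (isPGroup_auxOp C) _
      · rintro c hc y ⟨w, hw, rfl⟩
        have hc' : g⁻¹ * c * g ∈ C := by
          have := hCstab g⁻¹ (inv_mem hg) c hc
          simpa using this
        have hw' : (g⁻¹ * c * g) * w * (g⁻¹ * c * g)⁻¹ ∈ auxOp p C :=
          conj_mem_auxOp hc' hw
        refine ⟨_, hw', ?_⟩
        simp only [MulEquiv.coe_toMonoidHom, MulAut.conj_apply]
        group
    refine hKle ⟨x, hx, ?_⟩
    simp only [MulEquiv.coe_toMonoidHom, MulAut.conj_apply]
  -- O_p(C) ≤ O_p(N)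
  have hQCle : auxOp p C ≤ auxOp p N :=
    le_auxOp ((auxOp_le C).trans hCN) (isPGroup_auxOp C)
      (fun g hg x hx => hQCstab g hg x hx)
  -- O_p(N) ∩ C ≤ O_p(C)
  have hinf : ∀ x, x ∈ auxOp p N → x ∈ C → x ∈ auxOp p C := by
    have : auxOp p N ⊓ C ≤ auxOp p C := by
      refine le_auxOp inf_le_right ((isPGroup_auxOp N).to_le inf_le_left) ?_
      intro c hc x hx
      rw [Subgroup.mem_inf] at hx
      exact Subgroup.mem_inf.mpr
        ⟨conj_mem_auxOp (hCN hc) hx.1, mul_mem (mul_mem hc hx.2) (inv_mem hc)⟩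
    intro x h1 h2
    exact this (Subgroup.mem_inf.mpr ⟨h1, h2⟩)
  rw [isCharP_iff, isCharP_iff]
  constructor
  · -- N char p → C char p
    intro hN z hzC hzcomm
    -- the subgroup Z = C_C(O_p(C))
    set Z : Subgroup G := C ⊓ Subgroup.centralizer (auxOp p C : Set G) with hZdef
    have hZC : Z ≤ C := inf_le_left
    have hZstab : ∀ g ∈ N, ∀ w ∈ Z, g * w * g⁻¹ ∈ Z := by
      intro g hg w hw
      rw [Subgroup.mem_inf] at hw ⊢
      refine ⟨hCstab g hg w hw.1, ?_⟩
      rw [Subgroup.mem_centralizer_iff]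
      intro x hx
      have hx' : g⁻¹ * x * g ∈ auxOp p C := by
        have := hQCstab g⁻¹ (inv_mem hg) x hx
        simpa using this
      have := Subgroup.mem_centralizer_iff.mp hw.2 _ hx'
      have h2 := congrArg (fun t => g * t * g⁻¹) this
      simpa [mul_assoc] using h2
    -- Z is a p-group
    have hZp : IsPGroup p Z := by
      intro w
      set z' := (w : G) with hz'def
      have hz' : z' ∈ Z := w.2
      set n := orderOf z' with hn
      have hn0 : n ≠ 0 := (orderOf_pos z').ne'
      set k := n.factorization p with hk
      set u := z' ^ p ^ k with hu
      have hdvd : p ^ k ∣ n := Nat.ordProj_dvd n p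
      have hm : orderOf u = n / p ^ k := by
        rw [hu, orderOf_pow, ← hn, Nat.gcd_eq_right hdvd]
      have hpm : ¬ p ∣ orderOf u := by
        rw [hm]
        exact Nat.not_dvd_ordCompl (Fact.out : p.Prime) hn0
      have huZ : u ∈ Z := pow_mem hz' _
      have huC : u ∈ C := hZC huZ
      have huN : u ∈ N := hCN huC
      -- u centralizes O_p(N)
      have hcent : ∀ q ∈ auxOp p N, q * u = u * q := by
        intro q hq
        have hqN : q ∈ N := auxOp_le N hq
        set c := u⁻¹ * (q⁻¹ * u * q) with hc
        have hcQN : c ∈ auxOp p N := by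
          rw [show c = (u⁻¹ * q⁻¹ * u⁻¹⁻¹) * q from by rw [hc]; group]
          exact mul_mem (conj_mem_auxOp (inv_mem huN) (inv_mem hq)) hq
        have hcZ : c ∈ Z := by
          refine mul_mem (inv_mem huZ) ?_
          have := hZstab q⁻¹ (inv_mem hqN) u huZ
          simpa using this
        have hcQC : c ∈ auxOp p C := hinf c hcQN ((Subgroup.mem_inf.mp hcZ).1)
        have hcomm : c * u = u * c :=
          Subgroup.mem_centralizer_iff.mp (Subgroup.mem_inf.mp huZ).2 c hcQC
        have key : q⁻¹ * u * q = u * c := by rw [hc]; group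
        have hcm : c ^ orderOf u = 1 := by
          have h1 : (q⁻¹ * u * q) ^ orderOf u = q⁻¹ * u ^ orderOf u * q := by
            have := conj_pow (i := orderOf u) (a := q⁻¹) (b := u)
            simpa using this
          have h2 : (u * c) ^ orderOf u = u ^ orderOf u * c ^ orderOf u :=
            (Commute.mul_pow ((Commute.symm hcomm)) _)
          rw [key] at h1
          rw [h2, pow_orderOf_eq_one, one_mul, mul_one, inv_mul_cancel] at h1
          exact h1
        have hc1 : c = 1 := by
          obtain ⟨j, hj⟩ := isPGroup_auxOp N ⟨c, hcQN⟩
          have hj' : c ^ p ^ j = 1 := by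
            have := congrArg (Subgroup.subtype _) hj
            simpa using this
          have hd1 : orderOf c ∣ p ^ j := orderOf_dvd_of_pow_eq_one hj'
          have hd2 : orderOf c ∣ orderOf u := orderOf_dvd_of_pow_eq_one hcm
          obtain ⟨i, hi, hieq⟩ := (Nat.dvd_prime_pow (Fact.out : p.Prime)).mp hd1
          rcases Nat.eq_zero_or_pos i with h0 | hpos
          · rw [← orderOf_eq_one_iff, hieq, h0, pow_zero]
          · exfalso
            apply hpm
            exact dvd_trans (dvd_trans (dvd_pow_self p hpos.ne') hieq.symm.dvd) hd2
        have : q⁻¹ * u * q = u := by rw [key, hc1, mul_one]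
        have h3 := congrArg (fun t => q * t) this
        have h4 : u * q = q * u := by simpa [mul_assoc] using h3
        exact h4.symm
      -- hence u ∈ O_p(N), so u = 1
      have huQN : u ∈ auxOp p N := hN u huN (fun x hx => hcent x hx)
      have hu1 : u = 1 := by
        obtain ⟨j, hj⟩ := isPGroup_auxOp N ⟨u, huQN⟩
        have hj' : u ^ p ^ j = 1 := by
          have := congrArg (Subgroup.subtype _) hj
          simpa using this
        have hd1 : orderOf u ∣ p ^ j := orderOf_dvd_of_pow_eq_one hj'
        obtain ⟨i, hi, hieq⟩ := (Nat.dvd_prime_pow (Fact.out : p.Prime)).mp hd1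
        rcases Nat.eq_zero_or_pos i with h0 | hpos
        · rw [← orderOf_eq_one_iff, hieq, h0, pow_zero]
        · exact absurd (dvd_trans (dvd_pow_self p hpos.ne') hieq.symm.dvd) hpm
      refine ⟨k, ?_⟩
      ext
      push_cast
      exact hu1
    have hZle : Z ≤ auxOp p C :=
      le_auxOp hZC hZp (fun g hg w hw => hZstab g (hCN hg) w hw)
    refine hZle (Subgroup.mem_inf.mpr ⟨hzC, ?_⟩)
    exact Subgroup.mem_centralizer_iff.mpr hzcomm
  · -- C char p → N char p
    intro hC g hgN hcomm
    have hgC : g ∈ C := by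
      rw [hCdef, Subgroup.mem_centralizer_iff]
      intro x hx
      exact hcomm x (hPle hx)
    have := hC g hgC (fun x hx => hcomm x (hQCle hx))
    exact hQCle this
end
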